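/- For any β ≥ 0 and any Hermitian matrix H with non-positive off-diagonal entries, the matrix exponential exp(-βH) has all entries real and non-negative. -/

import Mathlib

open NormedSpace Nat

section Aux

attribute [local instance] Matrix.linftyOpNormedAddCommGroup Matrix.linftyOpNormedRing
  Matrix.linftyOpNormedAlgebra

variable {n : ℕ}

lemma pow_entry_nonneg (N : Matrix (Fin n) (Fin n) ℝ) (hN : ∀ x y, 0 ≤ N x y) (k : ℕ) :
    ∀ x y, 0 ≤ (N ^ k) x y := by
  induction k with
  | zero => intro x y; simp [Matrix.one_apply]; positivity
  | succ k ih =>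
    intro x y
    rw [pow_succ, Matrix.mul_apply]
    exact Finset.sum_nonneg fun j _ => mul_nonneg (ih x j) (hN j y)

lemma exp_entry_nonneg_of_nonneg (N : Matrix (Fin n) (Fin n) ℝ) (hN : ∀ x y, 0 ≤ N x y) :
    ∀ x y, 0 ≤ (exp N) x y := by
  intro x y
  have hs : HasSum (fun (k : ℕ) => (k ! : ℝ)⁻¹ • N ^ k) (exp N) := by
    have h0 := expSeries_hasSum_exp (𝕂 := ℝ) N
    simp only [expSeries_apply_eq] at h0; exact h0
  let e : Matrix (Fin n) (Fin n) ℝ →+ ℝ :=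
    { toFun := fun A => A x y, map_zero' := rfl, map_add' := fun _ _ => rfl }
  have hs2 := hs.map e (continuous_id.matrix_elem x y)
  have h3 : 0 ≤ e (exp N) :=
    hasSum_le (fun k => mul_nonneg (by positivity) (pow_entry_nonneg N hN k x y))
      hasSum_zero hs2
  exact h3

lemma exp_entry_nonneg_of_offdiag_nonneg (M : Matrix (Fin n) (Fin n) ℝ)
    (hM : ∀ x y, x ≠ y → 0 ≤ M x y) : ∀ x y, 0 ≤ (exp M) x y := by
  set c : ℝ := ∑ x, |M x x| with hc
  have hcb : ∀ x : Fin n, |M x x| ≤ c := fun x =>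
    Finset.single_le_sum (f := fun x => |M x x|) (fun i _ => abs_nonneg _) (Finset.mem_univ x)
  set D : Matrix (Fin n) (Fin n) ℝ := (-c) • (1 : Matrix (Fin n) (Fin n) ℝ) with hD
  have hcomm : Commute D (M - D) := by
    have h1 : Commute D M := by
      rw [hD]
      exact (Commute.one_left M).smul_left (-c)
    exact h1.sub_right (Commute.refl D)
  have hsplit : M = D + (M - D) := by abel
  have hexp : exp M = exp D * exp (M - D) := by
    conv_lhs => rw [hsplit]
    exact Matrix.exp_add_of_commute D (M - D) hcomm
  have hDdiag : D = Matrix.diagonal (fun _ : Fin n => -c) := by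
    rw [hD]; ext i j
    by_cases h : i = j <;> simp [Matrix.one_apply, Matrix.diagonal, h]
  have hexpD : exp D = Matrix.diagonal (fun _ : Fin n => Real.exp (-c)) := by
    rw [hDdiag, Matrix.exp_diagonal]
    have : (exp fun _ : Fin n => -c) = fun _ : Fin n => Real.exp (-c) := by
      funext i
      rw [Pi.coe_exp, Real.exp_eq_exp_ℝ]
    rw [this]
  have hMD : ∀ x y, 0 ≤ (M - D) x y := by
    intro x y
    by_cases h : x = y
    · subst h
      have : (M - D) x x = M x x + c := by
        simp [hD, Matrix.one_apply]
      rw [this]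
      have := hcb x
      have := neg_abs_le (M x x)
      linarith
    · have : (M - D) x y = M x y := by simp [hD, Matrix.one_apply, h]
      rw [this]
      exact hM x y h
  intro x y
  rw [hexp, hexpD, Matrix.diagonal_mul]
  exact mul_nonneg (Real.exp_nonneg _) (exp_entry_nonneg_of_nonneg _ hMD x y)

lemma exp_map_ofReal (M : Matrix (Fin n) (Fin n) ℝ) :
    exp (M.map (algebraMap ℝ ℂ)) = (exp M).map (algebraMap ℝ ℂ) := by
  have := map_exp
    (f := (RingHom.mapMatrix (algebraMap ℝ ℂ) : Matrix (Fin n) (Fin n) ℝ →+* Matrix (Fin n) (Fin n) ℂ))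
    (Continuous.matrix_map continuous_id (continuous_algebraMap ℝ ℂ)) M
  exact this.symm

end Aux

open NormedSpace in
/-- For any `β ≥ 0` and Hermitian `H` with real non-positive off-diagonal
entries, the matrix exponential `exp(-βH)` has real non-negative entries. -/
theorem stmt_1 {n : ℕ} (H : Matrix (Fin n) (Fin n) ℂ)
    (hH : H.IsHermitian)
    (hoff : ∀ x y, x ≠ y → (H x y).im = 0 ∧ (H x y).re ≤ 0)
    (β : ℝ) (hβ : 0 ≤ β) :
    ∀ x y, ((exp (-((β : ℂ) • H))) x y).im = 0 ∧
      0 ≤ ((exp (-((β : ℂ) • H))) x y).re := by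
  set M : Matrix (Fin n) (Fin n) ℝ := Matrix.of (fun x y => -(β * (H x y).re)) with hM
  have him : ∀ x y, (H x y).im = 0 := by
    intro x y
    by_cases h : x = y
    · subst h
      have h2 := hH.apply x x
      have h3 : (starRingEnd ℂ) (H x x) = H x x := h2
      exact Complex.conj_eq_iff_im.mp h3
    · exact (hoff x y h).1
  have hKey : -((β : ℂ) • H) = M.map (algebraMap ℝ ℂ) := by
    ext x y
    simp only [Matrix.map_apply, Matrix.neg_apply, Matrix.smul_apply, hM, Matrix.of_apply]
    rw [Complex.ext_iff]
    constructor
    · simp [Complex.ofReal_mul, him x y]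
    · simp [him x y]
  rw [hKey, exp_map_ofReal]
  intro x y
  simp only [Matrix.map_apply, Complex.coe_algebraMap]
  refine ⟨Complex.ofReal_im _, ?_⟩
  rw [Complex.ofReal_re]
  refine exp_entry_nonneg_of_offdiag_nonneg M ?_ x y
  intro a b hab
  simp only [hM, Matrix.of_apply]
  have := (hoff a b hab).2
  nlinarith
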